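/- Let γ > 1 and suppose T satisfies the Functional Correlation Bound with rate n^{−γ} for η-Hölder observables. Then there exists a constant C > 0 such that for all integers k ≥ 1 and n ≥ 2k and all bounded η-Hölder v, w : M → ℝ the following holds. Set a_i = ⌊in/(2k)⌋ for 0 ≤ i ≤ 2k, let X_i = 𝕊_{v,w}(a_{2i}, a_{2i+1}) − E_μ[𝕊_{v,w}(a_{2i}, a_{2i+1})] for 0 ≤ i < k, viewed as (mean zero) random variables on (M,μ), and let X̂_0,…,X̂_{k−1} be independent random variables on some probability space with X̂_i equal in distribution to X_i. Then E_μ[|Σ_{i=0}^{k−1} X_i|^{γ}] ≤ C k n^{γ} ‖v‖_η^{γ} ‖w‖_η^{γ} + E[|Σ_{i=0}^{k−1} X̂_i|^{γ}]. -/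

import Mathlib

set_option maxHeartbeats 2000000


open MeasureTheory Function

/-- `T` satisfies the Functional Correlation Bound with rate `n ^ (-γ)` for `η`-Hölder
observables: there is a constant `C₀ > 0` such that for all `0 ≤ p < q`, all monotone sequences
of times `n_0 ≤ ⋯ ≤ n_{q-1}`, and every bounded separately `η`-Hölder `G : M^q → ℝ`
(with bound `Ginf` on `|G|` and separate Hölder constants `Gh i`), the correlation between
`G(T^{n_0}x, …, T^{n_{q-1}}x)` and the decoupled version (where the first `p` coordinates use
`x₀` and the remaining ones `x₁`) is at most
`C₀ (n_p - n_{p-1})^{-γ} (Ginf + ∑ i, Gh i)`. -/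
def FunctionalCorrelationBound {M : Type*} [MetricSpace M] [MeasurableSpace M]
    (μ : Measure M) (T : M → M) (η γ : ℝ) : Prop :=
  ∃ C₀ : ℝ, 0 < C₀ ∧
    ∀ (q p : ℕ), p < q →
    ∀ n : ℕ → ℕ, Monotone n → n (p - 1) < n p →
    ∀ G : (Fin q → M) → ℝ, Measurable G →
    ∀ Ginf : ℝ, 0 ≤ Ginf → (∀ x, |G x| ≤ Ginf) →
    ∀ Gh : Fin q → ℝ, (∀ i, 0 ≤ Gh i) →
    (∀ (i : Fin q) (x : Fin q → M) (y : M),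
        |G x - G (Function.update x i y)| ≤ Gh i * dist (x i) y ^ η) →
    |(∫ x, G (fun i => T^[n i] x) ∂μ) -
        ∫ x₀, ∫ x₁, G (fun i => if (i : ℕ) < p then T^[n i] x₀ else T^[n i] x₁) ∂μ ∂μ|
      ≤ C₀ * ((n p : ℝ) - (n (p - 1) : ℝ)) ^ (-γ) * (Ginf + ∑ i, Gh i)


private lemma aux_holder_cont {M : Type*} [MetricSpace M] {v : M → ℝ} {Vh η : ℝ}
    (hη0 : 0 < η) (h : ∀ x y, |v x - v y| ≤ Vh * dist x y ^ η) : Continuous v := by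
  rw [continuous_iff_continuousAt]
  intro x
  have h1 : Filter.Tendsto (fun y => Vh * dist y x ^ η) (nhds x) (nhds (Vh * (0:ℝ) ^ η)) := by
    apply Filter.Tendsto.const_mul
    have h2 : Filter.Tendsto (fun y => dist y x) (nhds x) (nhds 0) := by
      simpa using (continuous_id.dist (continuous_const : Continuous fun _ : M => x)).tendsto x
    exact (Real.continuousAt_rpow_const 0 η (Or.inr hη0.le)).tendsto.comp h2
  rw [Real.zero_rpow (ne_of_gt hη0), mul_zero] at h1
  have h3 : Filter.Tendsto (fun y => |v y - v x|) (nhds x) (nhds 0) :=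
    squeeze_zero (fun y => abs_nonneg _) (fun y => h y x) h1
  rw [ContinuousAt, tendsto_iff_dist_tendsto_zero]
  simpa [Real.dist_eq] using h3

private lemma aux_rpow_lip {γ R a b : ℝ} (hγ : 1 ≤ γ) (hR : 0 ≤ R)
    (ha : |a| ≤ R) (hb : |b| ≤ R) :
    |(|a| ^ γ - |b| ^ γ)| ≤ γ * R ^ (γ - 1) * |a - b| := by
  have key : ‖|a| ^ γ - |b| ^ γ‖ ≤ (γ * R ^ (γ - 1)) * ‖|a| - |b|‖ := by
    refine Convex.norm_image_sub_le_of_norm_hasDerivWithin_le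
      (f := fun x : ℝ => x ^ γ) (f' := fun x : ℝ => γ * x ^ (γ - 1)) (s := Set.Icc 0 R)
      (fun x _ => (Real.hasDerivAt_rpow_const (Or.inr hγ)).hasDerivWithinAt)
      (fun x hx => ?_) (convex_Icc 0 R) ⟨abs_nonneg b, hb⟩ ⟨abs_nonneg a, ha⟩
    rw [Real.norm_eq_abs, abs_mul, abs_of_nonneg (by linarith : (0:ℝ) ≤ γ),
      abs_of_nonneg (Real.rpow_nonneg hx.1 _)]
    exact mul_le_mul_of_nonneg_left (Real.rpow_le_rpow hx.1 hx.2 (by linarith)) (by linarith)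
  calc |(|a| ^ γ - |b| ^ γ)| ≤ (γ * R ^ (γ - 1)) * |(|a| - |b|)| := key
  _ ≤ (γ * R ^ (γ - 1)) * |a - b| :=
      mul_le_mul_of_nonneg_left (abs_abs_sub_abs_le_abs_sub a b) (by positivity)

private lemma aux_iIndep_congr {Ω ι : Type*} [MeasurableSpace Ω] {P : Measure Ω}
    {f g : ι → Ω → ℝ}
    (h : ProbabilityTheory.iIndepFun f P)
    (hfg : ∀ i, f i =ᵐ[P] g i) :
    ProbabilityTheory.iIndepFun g P := by
  rw [ProbabilityTheory.iIndepFun_iff_measure_inter_preimage_eq_mul] at h ⊢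
  intro S sets hsets
  have hae : ∀ᵐ ω ∂P, ∀ i ∈ S, f i ω = g i ω := by
    rw [Filter.eventually_all_finset]
    exact fun i _ => hfg i
  have h1 : P (⋂ i ∈ S, g i ⁻¹' sets i) = P (⋂ i ∈ S, f i ⁻¹' sets i) := by
    apply measure_congr
    filter_upwards [hae] with ω hω
    show (ω ∈ ⋂ i ∈ S, g i ⁻¹' sets i) = (ω ∈ ⋂ i ∈ S, f i ⁻¹' sets i)
    simp only [eq_iff_iff, Set.mem_iInter, Set.mem_preimage]
    constructor <;> intro hmem j hj
    · rw [hω j hj]; exact hmem j hj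
    · rw [← hω j hj]; exact hmem j hj
  rw [h1, h S hsets]
  refine Finset.prod_congr rfl fun i hi => measure_congr ?_
  filter_upwards [hfg i] with ω hω
  show (ω ∈ f i ⁻¹' sets i) = (ω ∈ g i ⁻¹' sets i)
  simp only [eq_iff_iff, Set.mem_preimage]
  rw [hω]

private lemma aux_rpow_succ {x p : ℝ} (hx : 0 ≤ x) (hp : p ≠ 0) (hp1 : p + 1 ≠ 0) :
    x ^ p * x = x ^ (p + 1) := by
  rcases eq_or_lt_of_le hx with h | h
  · rw [← h, Real.zero_rpow hp, Real.zero_rpow hp1, zero_mul]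
  · rw [Real.rpow_add h, Real.rpow_one]

private lemma aux_integrable_of_bdd {α : Type*} [MeasurableSpace α] {ν : Measure α}
    [IsFiniteMeasure ν] {f : α → ℝ} {C : ℝ}
    (hm : AEStronglyMeasurable f ν) (h : ∀ x, |f x| ≤ C) : Integrable f ν :=
  ⟨hm, HasFiniteIntegral.of_bounded (C := C) (Filter.Eventually.of_forall fun x => by
    simpa [Real.norm_eq_abs] using h x)⟩


/-- **Lemma 5.7.** Suppose `T` satisfies the Functional Correlation Bound with rate `n^{-γ}`,
`γ > 1`. Then there is `C > 0` such that for all `k ≥ 1`, `n ≥ 2k`, all bounded `η`-Hölder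
`v, w`, with `a_i = ⌊in/(2k)⌋`, `X_i = 𝕊_{v,w}(a_{2i}, a_{2i+1}) - E_μ[𝕊_{v,w}(a_{2i}, a_{2i+1})]`
and independent `X̂_i` with `X̂_i =_d X_i`:
`E_μ[|∑ X_i|^γ] ≤ C k n^γ ‖v‖_η^γ ‖w‖_η^γ + E[|∑ X̂_i|^γ]`. -/
theorem stmt4 {M : Type*} [MetricSpace M] [MeasurableSpace M] [BorelSpace M]
    (μ : Measure M) [IsProbabilityMeasure μ] (T : M → M) (hT : MeasurePreserving T μ μ)
    (η : ℝ) (hη0 : 0 < η) (hη1 : η ≤ 1) (γ : ℝ) (hγ : 1 < γ)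
    (hFCB : FunctionalCorrelationBound μ T η γ) :
    ∃ C : ℝ, 0 < C ∧
      ∀ (k n : ℕ), 1 ≤ k → 2 * k ≤ n →
      ∀ (v w : M → ℝ) (Vinf Vh Winf Wh : ℝ),
        0 ≤ Vinf → 0 ≤ Vh → 0 ≤ Winf → 0 ≤ Wh →
        (∀ x, |v x| ≤ Vinf) → (∀ x y, |v x - v y| ≤ Vh * dist x y ^ η) →
        (∀ x, |w x| ≤ Winf) → (∀ x y, |w x - w y| ≤ Wh * dist x y ^ η) →
      ∀ (S : ℕ → M → ℝ),
        (∀ i, i < k → S i = fun x =>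
          ∑ j ∈ Finset.Ico (2 * i * n / (2 * k)) ((2 * i + 1) * n / (2 * k)),
            ∑ l ∈ Finset.Ico (2 * i * n / (2 * k)) j, v (T^[l] x) * w (T^[j] x)) →
      ∀ (X : ℕ → M → ℝ),
        (∀ i, i < k → X i = fun x => S i x - ∫ y, S i y ∂μ) →
      ∀ (Ω : Type) (_ : MeasurableSpace Ω) (P : Measure Ω), IsProbabilityMeasure P →
      ∀ (Xhat : ℕ → Ω → ℝ),
        ProbabilityTheory.iIndepFun
          (fun i : Fin k => Xhat i) P →
        (∀ i, i < k → ProbabilityTheory.IdentDistrib (Xhat i) (X i) P μ) →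
        (∫ x, |∑ i ∈ Finset.range k, X i x| ^ γ ∂μ)
          ≤ C * (k : ℝ) * (n : ℝ) ^ γ * (Vinf + Vh) ^ γ * (Winf + Wh) ^ γ +
            ∫ ω, |∑ i ∈ Finset.range k, Xhat i ω| ^ γ ∂P := by
  classical
  obtain ⟨C₀, hC₀, hF⟩ := hFCB
  have hγ0 : (0:ℝ) < γ := lt_trans one_pos hγ
  refine ⟨C₀ * 4 ^ γ * (1 + γ), by positivity, ?_⟩
  intro k n hk hn v w Vinf Vh Winf Wh hVinf0 hVh0 hWinf0 hWh0 hv hvh hw hwh S hS X hX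
    Ω mΩ P hP Xhat hIndep hIdent
  have hvc : Continuous v := aux_holder_cont hη0 hvh
  have hwc : Continuous w := aux_holder_cont hη0 hwh
  have hTm : Measurable T := hT.measurable
  have hTit : ∀ l : ℕ, Measurable (T^[l]) := fun l => hTm.iterate l
  have hm0 : 0 < 2 * k := by omega
  set a : ℕ → ℕ := fun i => i * n / (2 * k) with ha
  set L : ℕ := n / (2 * k) with hL
  have hL1 : 1 ≤ L := (Nat.one_le_div_iff hm0).2 hn
  have ha_mono : Monotone a := fun i j hij => Nat.div_le_div_right (Nat.mul_le_mul_right n hij)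
  have ha_add : ∀ i : ℕ, a i + L ≤ a (i + 1) ∧ a (i + 1) ≤ a i + (L + 1) := by
    intro i
    have h1 : (i + 1) * n = i * n + n := by ring
    have h2 : a (i + 1) = i * n / (2 * k) + n / (2 * k)
        + if 2 * k ≤ i * n % (2 * k) + n % (2 * k) then 1 else 0 := by
      simp only [ha, h1, Nat.add_div hm0]
    constructor <;> (simp only [ha, hL] at h2 ⊢; rw [h2]; split_ifs <;> omega)
  have ha_top : a (2 * k) = n := by
    simp only [ha]
    exact Nat.mul_div_cancel_left n hm0
  -- real-valued constants
  set K : ℝ := ((L : ℝ) + 1) ^ 2 * (Vinf * Winf) with hK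
  have hK0 : 0 ≤ K := by positivity
  set B : ℝ := 2 * K with hB
  have hB0 : 0 ≤ B := by positivity
  set Rr : ℝ := (k : ℝ) * B with hRr
  have hRr0 : 0 ≤ Rr := by positivity
  -- the truncated power function
  set clamp : ℝ → ℝ := fun t => max (-Rr) (min Rr t) with hclamp
  set φ : ℝ → ℝ := fun t => |clamp t| ^ γ with hφ
  have hclamp_le : ∀ t, |clamp t| ≤ Rr := by
    intro t
    rw [abs_le]
    refine ⟨le_max_left _ _, max_le (by linarith only [hRr0]) (min_le_left _ _)⟩
  have hclamp_lip : ∀ s t, |clamp s - clamp t| ≤ |s - t| := by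
    intro s t
    have h1 := abs_max_sub_max_le_max (-Rr) (min Rr s) (-Rr) (min Rr t)
    have h2 := abs_min_sub_min_le_max Rr s Rr t
    simp only [sub_self, abs_zero] at h1 h2
    rw [max_eq_right (abs_nonneg (min Rr s - min Rr t))] at h1
    rw [max_eq_right (abs_nonneg (s - t))] at h2
    exact h1.trans h2
  have hclamp_id : ∀ t, |t| ≤ Rr → clamp t = t := by
    intro t ht
    rw [abs_le] at ht
    simp only [hclamp]
    rw [min_eq_right ht.2, max_eq_right ht.1]
  have hφ_nonneg : ∀ t, 0 ≤ φ t := fun t => Real.rpow_nonneg (abs_nonneg _) _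
  have hφ_bdd : ∀ t, |φ t| ≤ Rr ^ γ := fun t => by
    rw [abs_of_nonneg (hφ_nonneg t)]
    exact Real.rpow_le_rpow (abs_nonneg _) (hclamp_le t) hγ0.le
  set Lφ : ℝ := γ * Rr ^ (γ - 1) with hLφ
  have hLφ0 : 0 ≤ Lφ := by positivity
  have hφ_lip : ∀ s t, |φ s - φ t| ≤ Lφ * |s - t| := by
    intro s t
    calc |φ s - φ t| ≤ γ * Rr ^ (γ - 1) * |clamp s - clamp t| :=
          aux_rpow_lip hγ.le hRr0 (hclamp_le s) (hclamp_le t)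
    _ ≤ Lφ * |s - t| := mul_le_mul_of_nonneg_left (hclamp_lip s t) hLφ0
  have hφ_cont : Continuous φ := by
    have h1 : LipschitzWith (Real.toNNReal Lφ) φ := LipschitzWith.of_dist_le_mul fun s t => by
      rw [Real.dist_eq, Real.dist_eq, Real.coe_toNNReal _ hLφ0]
      exact hφ_lip s t
    exact h1.continuous
  have hφ_meas : Measurable φ := hφ_cont.measurable
  have hφ_eq : ∀ t, |t| ≤ Rr → φ t = |t| ^ γ := fun t ht => by
    show |clamp t| ^ γ = |t| ^ γ
    rw [hclamp_id t ht]
  -- measurable versions of Xhat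
  have hXhat_ae : ∀ i, i < k → AEMeasurable (Xhat i) P := fun i h => (hIdent i h).aemeasurable_fst
  set Y : ℕ → Ω → ℝ := fun i => if h : i < k then (hXhat_ae i h).mk (Xhat i) else fun _ => 0
    with hY
  have hY_meas : ∀ i, Measurable (Y i) := by
    intro i
    simp only [hY]
    split_ifs with h
    · exact (hXhat_ae i h).measurable_mk
    · exact measurable_const
  have hY_ae : ∀ i, i < k → Xhat i =ᵐ[P] Y i := by
    intro i h
    simp only [hY, dif_pos h]
    exact (hXhat_ae i h).ae_eq_mk
  have hY_ident : ∀ i, i < k → ProbabilityTheory.IdentDistrib (Y i) (X i) P μ := fun i h =>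
    ⟨(hY_meas i).aemeasurable, (hIdent i h).aemeasurable_snd, by
      rw [← Measure.map_congr (hY_ae i h)]
      exact (hIdent i h).map_eq⟩
  have hY_indep : ProbabilityTheory.iIndepFun
      (fun i : Fin k => Y i) P :=
    aux_iIndep_congr hIndep (fun i => hY_ae i i.isLt)
  -- measurability and bounds for S, X
  have hS_meas : ∀ i, i < k → Measurable (S i) := by
    intro i h
    rw [hS i h]
    exact Finset.measurable_sum _ fun j _ => Finset.measurable_sum _ fun l _ =>
      (hvc.measurable.comp (hTit l)).mul (hwc.measurable.comp (hTit j))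
  have hX_meas : ∀ i, i < k → Measurable (X i) := fun i h => by
    rw [hX i h]
    exact (hS_meas i h).sub measurable_const
  -- block sums as functions of trajectories
  set Sb : ℕ → (ℕ → M) → ℝ := fun i y =>
    ∑ jj ∈ Finset.Ico (a (2 * i)) (a (2 * i + 1)), ∑ l ∈ Finset.Ico (a (2 * i)) jj,
      v (y l) * w (y jj) with hSb
  have hSb_ext : ∀ (i : ℕ) (y y' : ℕ → M),
      (∀ u, a (2 * i) ≤ u → u < a (2 * i + 1) → y u = y' u) → Sb i y = Sb i y' := by
    intro i y y' hyy
    simp only [hSb]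
    refine Finset.sum_congr rfl fun jj hjj => ?_
    rw [Finset.mem_Ico] at hjj
    rw [hyy jj hjj.1 hjj.2]
    refine Finset.sum_congr rfl fun l hl => ?_
    rw [Finset.mem_Ico] at hl
    rw [hyy l hl.1 (lt_trans hl.2 hjj.2)]
  have hSb_orbit : ∀ i, i < k → ∀ x : M, Sb i (fun u => T^[u] x) = S i x := by
    intro i h x
    rw [hS i h]
  have hSb_bdd : ∀ (i : ℕ), i < k → ∀ y : ℕ → M, |Sb i y| ≤ K := by
    intro i _ y
    simp only [hSb]
    have hcard : ∀ jj, jj ∈ Finset.Ico (a (2 * i)) (a (2 * i + 1)) →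
        ((Finset.Ico (a (2 * i)) jj).card : ℝ) ≤ (L : ℝ) + 1 := by
      intro jj hjj
      rw [Finset.mem_Ico] at hjj
      rw [Nat.card_Ico]
      have h2 := (ha_add (2 * i)).2
      have : jj - a (2 * i) ≤ L + 1 := by omega
      exact_mod_cast this
    calc |∑ jj ∈ Finset.Ico (a (2 * i)) (a (2 * i + 1)), ∑ l ∈ Finset.Ico (a (2 * i)) jj,
            v (y l) * w (y jj)|
        ≤ ∑ jj ∈ Finset.Ico (a (2 * i)) (a (2 * i + 1)), |∑ l ∈ Finset.Ico (a (2 * i)) jj,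
            v (y l) * w (y jj)| := Finset.abs_sum_le_sum_abs _ _
      _ ≤ ∑ jj ∈ Finset.Ico (a (2 * i)) (a (2 * i + 1)), ((L : ℝ) + 1) * (Vinf * Winf) := by
          refine Finset.sum_le_sum fun jj hjj => ?_
          calc |∑ l ∈ Finset.Ico (a (2 * i)) jj, v (y l) * w (y jj)|
              ≤ ∑ l ∈ Finset.Ico (a (2 * i)) jj, |v (y l) * w (y jj)| :=
                Finset.abs_sum_le_sum_abs _ _
            _ ≤ ∑ l ∈ Finset.Ico (a (2 * i)) jj, Vinf * Winf := by
                refine Finset.sum_le_sum fun l _ => ?_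
                rw [abs_mul]
                exact mul_le_mul (hv _) (hw _) (abs_nonneg _) hVinf0
            _ = ((Finset.Ico (a (2 * i)) jj).card : ℝ) * (Vinf * Winf) := by
                rw [Finset.sum_const, nsmul_eq_mul]
            _ ≤ ((L : ℝ) + 1) * (Vinf * Winf) :=
                mul_le_mul_of_nonneg_right (hcard jj hjj) (by positivity)
      _ = ((Finset.Ico (a (2 * i)) (a (2 * i + 1))).card : ℝ) * (((L : ℝ) + 1) * (Vinf * Winf))
          := by rw [Finset.sum_const, nsmul_eq_mul]
      _ ≤ ((L : ℝ) + 1) * (((L : ℝ) + 1) * (Vinf * Winf)) := by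
          refine mul_le_mul_of_nonneg_right ?_ (by positivity)
          rw [Nat.card_Ico]
          have h2 := (ha_add (2 * i)).2
          have : a (2 * i + 1) - a (2 * i) ≤ L + 1 := by omega
          exact_mod_cast this
      _ = K := by rw [hK]; ring
  have hS_bdd : ∀ i, i < k → ∀ x : M, |S i x| ≤ K := fun i h x => by
    rw [← hSb_orbit i h x]; exact hSb_bdd i h _
  have hI_bdd : ∀ i, i < k → |∫ y, S i y ∂μ| ≤ K := by
    intro i h
    have h1 : ‖∫ y, S i y ∂μ‖ ≤ K * (μ Set.univ).toReal :=
      norm_integral_le_of_norm_le_const (Filter.Eventually.of_forall fun y => by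
        simpa [Real.norm_eq_abs] using hS_bdd i h y)
    simpa [Real.norm_eq_abs] using h1
  have hX_bdd : ∀ i, i < k → ∀ x : M, |X i x| ≤ B := by
    intro i h x
    rw [hX i h]
    calc |S i x - ∫ y, S i y ∂μ| ≤ |S i x| + |∫ y, S i y ∂μ| := abs_sub _ _
    _ ≤ K + K := add_le_add (hS_bdd i h x) (hI_bdd i h)
    _ = B := by rw [hB]; ring
  have hsum_bdd : ∀ (j : ℕ) (x : M), |∑ i ∈ Finset.Ico j k, X i x| ≤ Rr := by
    intro j x
    calc |∑ i ∈ Finset.Ico j k, X i x| ≤ ∑ i ∈ Finset.Ico j k, |X i x| :=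
          Finset.abs_sum_le_sum_abs _ _
    _ ≤ ∑ i ∈ Finset.Ico j k, B :=
        Finset.sum_le_sum fun i hi => hX_bdd i (Finset.mem_Ico.1 hi).2 x
    _ = ((Finset.Ico j k).card : ℝ) * B := by rw [Finset.sum_const, nsmul_eq_mul]
    _ ≤ (k : ℝ) * B := by
        refine mul_le_mul_of_nonneg_right ?_ hB0
        rw [Nat.card_Ico]
        exact_mod_cast Nat.sub_le k j
    _ = Rr := hRr.symm
  -- the auxiliary functions ψ and the hybrid quantities D
  set A : ℕ → Ω → ℝ := fun j ω => ∑ i ∈ Finset.range j, Y i ω with hA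
  have hA_meas : ∀ j, Measurable (A j) := fun j =>
    Finset.measurable_sum _ fun i _ => hY_meas i
  set ψ : ℕ → ℝ → ℝ := fun j t => ∫ ω, φ (t + A j ω) ∂P with hψ
  have hint_φA : ∀ j t, Integrable (fun ω => φ (t + A j ω)) P := fun j t =>
    aux_integrable_of_bdd
      ((hφ_meas.comp (measurable_const.add (hA_meas j))).aestronglyMeasurable)
      (fun ω => hφ_bdd _)
  have hψ_bdd : ∀ j t, |ψ j t| ≤ Rr ^ γ := by
    intro j t
    have h1 : ‖∫ ω, φ (t + A j ω) ∂P‖ ≤ Rr ^ γ * (P Set.univ).toReal :=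
      norm_integral_le_of_norm_le_const (Filter.Eventually.of_forall fun ω => by
        simpa [Real.norm_eq_abs] using hφ_bdd (t + A j ω))
    simpa [hψ, Real.norm_eq_abs] using h1
  have hψ_lip : ∀ j s t, |ψ j s - ψ j t| ≤ Lφ * |s - t| := by
    intro j s t
    have h0 : ψ j s - ψ j t = ∫ ω, (φ (s + A j ω) - φ (t + A j ω)) ∂P := by
      rw [integral_sub (hint_φA j s) (hint_φA j t)]
    rw [h0]
    have h1 : ‖∫ ω, (φ (s + A j ω) - φ (t + A j ω)) ∂P‖
        ≤ (Lφ * |s - t|) * (P Set.univ).toReal :=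
      norm_integral_le_of_norm_le_const (Filter.Eventually.of_forall fun ω => by
        have h2 := hφ_lip (s + A j ω) (t + A j ω)
        rw [add_sub_add_right_eq_sub] at h2
        simpa [Real.norm_eq_abs] using h2)
    simpa [Real.norm_eq_abs] using h1
  have hψ_cont : ∀ j, Continuous (ψ j) := by
    intro j
    have h1 : LipschitzWith (Real.toNNReal Lφ) (ψ j) := LipschitzWith.of_dist_le_mul fun s t => by
      rw [Real.dist_eq, Real.dist_eq, Real.coe_toNNReal _ hLφ0]
      exact hψ_lip j s t
    exact h1.continuous
  -- the key decoupling identity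
  have key_b : ∀ j, j < k → ∀ t : ℝ, (∫ x₀, ψ j (X j x₀ + t) ∂μ) = ψ (j + 1) t := by
    intro j hj t
    have hAY : ProbabilityTheory.IndepFun (A j) (Y j) P := by
      have h1 := hY_indep.indepFun_finsetSum_of_notMem (fun i : Fin k => hY_meas i)
        (s := Finset.filter (fun i : Fin k => (i : ℕ) < j) Finset.univ) (i := ⟨j, hj⟩)
        (by simp)
      have h2 : A j = (∑ i ∈ Finset.filter (fun i : Fin k => (i : ℕ) < j) Finset.univ,
          fun ω => Y (i : ℕ) ω) := by
        funext ω
        rw [Finset.sum_apply]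
        simp only [hA]
        refine (Finset.sum_bij (fun (i : Fin k) _ => (i : ℕ)) ?_ ?_ ?_ ?_).symm
        · intro i hi
          rw [Finset.mem_filter] at hi
          exact Finset.mem_range.2 hi.2
        · intro i hi i' hi' hii
          exact Fin.val_injective hii
        · intro l hl
          rw [Finset.mem_range] at hl
          exact ⟨⟨l, lt_trans hl hj⟩, Finset.mem_filter.2 ⟨Finset.mem_univ _, hl⟩, rfl⟩
        · intro i _
          rfl
      rw [h2]
      exact h1
    have hmap : Measure.map (fun ω => (A j ω, Y j ω)) P
        = (Measure.map (A j) P).prod (Measure.map (Y j) P) :=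
      (ProbabilityTheory.indepFun_iff_map_prod_eq_prod_map_map (hA_meas j).aemeasurable
        (hY_meas j).aemeasurable).1 hAY
    haveI hpm1 : IsProbabilityMeasure (Measure.map (A j) P) :=
      Measure.isProbabilityMeasure_map (hA_meas j).aemeasurable
    haveI hpm2 : IsProbabilityMeasure (Measure.map (Y j) P) :=
      Measure.isProbabilityMeasure_map (hY_meas j).aemeasurable
    have hYX : Measure.map (Y j) P = Measure.map (X j) μ := (hY_ident j hj).map_eq
    have hcont : Continuous (fun pr : ℝ × ℝ => φ (t + pr.1 + pr.2)) :=
      hφ_cont.comp ((continuous_const.add continuous_fst).add continuous_snd)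
    have e1 : ψ (j + 1) t = ∫ ω, φ (t + A j ω + Y j ω) ∂P := by
      simp only [hψ, hA]
      refine integral_congr_ae (Filter.Eventually.of_forall fun ω => ?_)
      show φ (t + ∑ i ∈ Finset.range (j + 1), Y i ω)
          = φ (t + ∑ i ∈ Finset.range j, Y i ω + Y j ω)
      rw [Finset.sum_range_succ, add_assoc]
    have e2 : ∫ ω, φ (t + A j ω + Y j ω) ∂P
        = ∫ pr : ℝ × ℝ, φ (t + pr.1 + pr.2)
            ∂((Measure.map (A j) P).prod (Measure.map (Y j) P)) := by
      rw [← hmap, integral_map ((hA_meas j).prodMk (hY_meas j)).aemeasurable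
        hcont.aestronglyMeasurable]
    have hint : Integrable (fun pr : ℝ × ℝ => φ (t + pr.1 + pr.2))
        ((Measure.map (A j) P).prod (Measure.map (Y j) P)) :=
      aux_integrable_of_bdd hcont.aestronglyMeasurable (fun pr => hφ_bdd _)
    have e3 : ∫ pr : ℝ × ℝ, φ (t + pr.1 + pr.2)
          ∂((Measure.map (A j) P).prod (Measure.map (Y j) P))
        = ∫ bb, (∫ aa, φ (t + aa + bb) ∂(Measure.map (A j) P)) ∂(Measure.map (Y j) P) :=
      integral_prod_symm _ hint
    have e4 : ∀ bb : ℝ, (∫ aa, φ (t + aa + bb) ∂(Measure.map (A j) P)) = ψ j (bb + t) := by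
      intro bb
      have hc : Continuous (fun aa : ℝ => φ (t + aa + bb)) :=
        hφ_cont.comp ((continuous_const.add continuous_id).add continuous_const)
      rw [integral_map (hA_meas j).aemeasurable hc.aestronglyMeasurable]
      simp only [hψ]
      refine integral_congr_ae (Filter.Eventually.of_forall fun ω => ?_)
      congr 1
      ring
    have e5 : ∫ bb, ψ j (bb + t) ∂(Measure.map (Y j) P) = ∫ x₀, ψ j (X j x₀ + t) ∂μ := by
      have hc : Continuous (fun bb : ℝ => ψ j (bb + t)) :=
        (hψ_cont j).comp (continuous_id.add continuous_const)
      rw [hYX, integral_map (hX_meas j hj).aemeasurable hc.aestronglyMeasurable]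
    rw [e1, e2, e3, integral_congr_ae (Filter.Eventually.of_forall e4), e5]
  set D : ℕ → ℝ := fun j => ∫ x, ψ j (∑ i ∈ Finset.Ico j k, X i x) ∂μ with hD
  have hψ0 : ∀ t, ψ 0 t = φ t := by
    intro t
    simp only [hψ, hA, Finset.range_zero, Finset.sum_empty, add_zero, integral_const,
      measure_univ, probReal_univ, one_smul]
  have hD0 : D 0 = ∫ x, |∑ i ∈ Finset.range k, X i x| ^ γ ∂μ := by
    simp only [hD]
    refine integral_congr_ae (Filter.Eventually.of_forall fun x => ?_)
    show ψ 0 (∑ i ∈ Finset.Ico 0 k, X i x) = |∑ i ∈ Finset.range k, X i x| ^ γ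
    rw [hψ0, Finset.range_eq_Ico]
    exact hφ_eq _ (hsum_bdd 0 x)
  have hDk : D k = ∫ ω, |∑ i ∈ Finset.range k, Xhat i ω| ^ γ ∂P := by
    have h1 : D k = ψ k 0 := by
      simp only [hD, Finset.Ico_self, Finset.sum_empty, integral_const, measure_univ,
        probReal_univ, one_smul]
    rw [h1]
    have hYbdd : ∀ i, i < k → ∀ᵐ ω ∂P, |Y i ω| ≤ B := by
      intro i hik
      have hset : MeasurableSet {r : ℝ | B < |r|} :=
        measurableSet_lt measurable_const measurable_abs
      have h2 := (hY_ident i hik).measure_mem_eq hset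
      have h3 : X i ⁻¹' {r : ℝ | B < |r|} = ∅ := by
        ext x
        simp only [Set.mem_preimage, Set.mem_setOf_eq, Set.mem_empty_iff_false, iff_false,
          not_lt]
        exact hX_bdd i hik x
      rw [h3, measure_empty] at h2
      rw [ae_iff]
      have h4 : {ω | ¬ |Y i ω| ≤ B} = Y i ⁻¹' {r : ℝ | B < |r|} := by
        ext ω
        simp [not_le]
      rw [h4]
      exact h2
    have hae : ∀ᵐ ω ∂P, ∀ i ∈ Finset.range k, (|Y i ω| ≤ B ∧ Xhat i ω = Y i ω) := by
      rw [Filter.eventually_all_finset]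
      intro i hi
      rw [Finset.mem_range] at hi
      filter_upwards [hYbdd i hi, hY_ae i hi] with ω ha1 ha2
      exact ⟨ha1, ha2⟩
    simp only [hψ]
    refine integral_congr_ae ?_
    filter_upwards [hae] with ω hω
    have hb : |∑ i ∈ Finset.range k, Y i ω| ≤ Rr := by
      calc |∑ i ∈ Finset.range k, Y i ω| ≤ ∑ i ∈ Finset.range k, |Y i ω| :=
            Finset.abs_sum_le_sum_abs _ _
      _ ≤ ∑ i ∈ Finset.range k, B := Finset.sum_le_sum fun i hi => (hω i hi).1
      _ = (k : ℝ) * B := by rw [Finset.sum_const, nsmul_eq_mul, Finset.card_range]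
      _ = Rr := hRr.symm
    have hsum : ∑ i ∈ Finset.range k, Xhat i ω = ∑ i ∈ Finset.range k, Y i ω :=
      Finset.sum_congr rfl fun i hi => (hω i hi).2
    show φ (0 + A k ω) = |∑ i ∈ Finset.range k, Xhat i ω| ^ γ
    rw [zero_add, hsum]
    exact hφ_eq _ hb
  have hstep : ∀ j, j < k → D j ≤ D (j + 1)
      + C₀ * 4 ^ γ * (1 + γ) * ((n : ℝ) ^ γ * ((Vinf + Vh) ^ γ * (Winf + Wh) ^ γ)) := by
    intro j hj
    have hERR0' : 0 ≤ C₀ * 4 ^ γ * (1 + γ)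
        * ((n : ℝ) ^ γ * ((Vinf + Vh) ^ γ * (Winf + Wh) ^ γ)) := by positivity
    by_cases hjk1 : j + 1 = k
    · have heq : D j = D (j + 1) := by
        have h1 : D j = ∫ x, ψ j (X j x + 0) ∂μ := by
          have h2 : Finset.Ico j k = {j} := by
            rw [← hjk1]
            exact Nat.Ico_succ_singleton j
          simp only [hD]
          refine integral_congr_ae (Filter.Eventually.of_forall fun x => ?_)
          show ψ j (∑ i ∈ Finset.Ico j k, X i x) = ψ j (X j x + 0)
          rw [h2, Finset.sum_singleton, add_zero]
        have h3 : D (j + 1) = ψ (j + 1) 0 := by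
          simp only [hD]
          rw [show Finset.Ico (j + 1) k = ∅ from by rw [hjk1]; exact Finset.Ico_self k]
          simp only [Finset.sum_empty, integral_const, measure_univ, probReal_univ,
            one_smul]
        rw [h1, h3, key_b j hj 0]
      linarith only [heq, hERR0']
    · -- main case: use the functional correlation bound
      set b := a (2 * j) with hb
      set c := a (2 * j + 1) with hc
      set g := a (2 * j + 2) with hg
      have hbc : b + L ≤ c := (ha_add (2 * j)).1
      have hcg : c + L ≤ g := by
        have h1 := (ha_add (2 * j + 1)).1
        rw [show 2 * j + 1 + 1 = 2 * j + 2 from by omega] at h1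
        exact h1
      have hgn : g + L ≤ n := by
        have h1 := (ha_add (2 * j + 2)).1
        have h2 : a (2 * j + 2 + 1) ≤ a (2 * k) := ha_mono (by omega)
        rw [ha_top] at h2
        omega
      set p := c - b with hp
      have hp1 : 1 ≤ p := by omega
      set q := p + (n - g) with hq
      have hpq : p < q := by omega
      have hq0 : 0 < q := by omega
      set nseq : ℕ → ℕ := fun u => if u < p then b + u else g + (u - p) with hnseq
      have hnseq_mono : Monotone nseq := by
        apply monotone_nat_of_le_succ
        intro u
        simp only [hnseq]
        split_ifs <;> omega
      have hgap : nseq (p - 1) < nseq p := by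
        simp only [hnseq]
        split_ifs <;> omega
      set e : ℕ → ℕ := fun u => if u < c then u - b else p + (u - g) with he
      set idx : ℕ → Fin q := fun u => ⟨e u % q, Nat.mod_lt _ hq0⟩ with hidx
      have hform : ∀ i, j ≤ i → i < k → ∀ u, a (2 * i) ≤ u → u < a (2 * i + 1) →
          (i = j ∧ b ≤ u ∧ u < c ∧ e u = u - b)
            ∨ (j < i ∧ g ≤ u ∧ u < n ∧ e u = p + (u - g)) := by
        intro i hji hik u hu1 hu2
        rcases eq_or_lt_of_le hji with heq2 | hlt
        · left
          have h1 : u < c := by rw [hc, heq2]; exact hu2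
          have h2 : b ≤ u := by rw [hb, heq2]; exact hu1
          refine ⟨heq2.symm, h2, h1, ?_⟩
          simp only [he]
          rw [if_pos h1]
        · right
          have hga : g ≤ a (2 * i) := by rw [hg]; exact ha_mono (by omega)
          have hn2 : a (2 * i + 1) ≤ n := by rw [← ha_top]; exact ha_mono (by omega)
          have h1 : g ≤ u := le_trans hga hu1
          have h2 : u < n := lt_of_lt_of_le hu2 hn2
          refine ⟨hlt, h1, h2, ?_⟩
          simp only [he]
          rw [if_neg (by omega)]
      have hballs : ∀ i, j ≤ i → i < k → ∀ u, a (2 * i) ≤ u → u < a (2 * i + 1) →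
          (e u < q ∧ nseq (e u) = u ∧ ((e u < p) ↔ i = j) ∧ (idx u : ℕ) = e u) := by
        intro i hji hik u hu1 hu2
        have hf := hform i hji hik u hu1 hu2
        have heq2 : e u < q := by rcases hf with ⟨_, _, _, h⟩ | ⟨_, _, _, h⟩ <;> omega
        have hnv : nseq (e u) = u := by
          simp only [hnseq]
          rcases hf with ⟨_, _, _, h⟩ | ⟨_, _, _, h⟩ <;> (split_ifs <;> omega)
        have hif : (e u < p) ↔ i = j := by
          constructor
          · intro h5
            rcases hf with ⟨h, _⟩ | ⟨_, _, _, h⟩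
            · exact h
            · omega
          · intro h5
            rcases hf with ⟨_, _, _, h⟩ | ⟨h, _⟩
            · omega
            · omega
        refine ⟨heq2, hnv, hif, ?_⟩
        simp only [hidx]
        exact Nat.mod_eq_of_lt heq2
      have hinj : ∀ i, j ≤ i → i < k → ∀ u, a (2 * i) ≤ u → u < a (2 * i + 1) →
          ∀ i', j ≤ i' → i' < k → ∀ u', a (2 * i') ≤ u' → u' < a (2 * i' + 1) →
          idx u = idx u' → u = u' := by
        intro i h1 h2 u h3 h4 i' h5 h6 u' h7 h8 hii
        have ha1 := hballs i h1 h2 u h3 h4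
        have ha2 := hballs i' h5 h6 u' h7 h8
        have hval : (idx u : ℕ) = (idx u' : ℕ) := by rw [hii]
        rw [ha1.2.2.2, ha2.2.2.2] at hval
        have hf1 := hform i h1 h2 u h3 h4
        have hf2 := hform i' h5 h6 u' h7 h8
        rcases hf1 with ⟨_, hb1, hc1, he1⟩ | ⟨_, hg1, hn1, he1⟩ <;>
          rcases hf2 with ⟨_, hb2, hc2, he2⟩ | ⟨_, hg2, hn2, he2⟩ <;> omega
      have hdisj : ∀ i i', j ≤ i → i < k → j ≤ i' → i' < k → ∀ u,
          a (2 * i) ≤ u → u < a (2 * i + 1) → a (2 * i') ≤ u → u < a (2 * i' + 1) →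
          i = i' := by
        intro i i' _ _ _ _ u h1 h2 h3 h4
        by_contra hne
        rcases lt_or_gt_of_ne hne with hlt | hlt
        · have := ha_mono (show 2 * i + 1 ≤ 2 * i' from by omega)
          omega
        · have := ha_mono (show 2 * i' + 1 ≤ 2 * i from by omega)
          omega
      -- the observable G
      set FF : (ℕ → M) → ℝ := fun y => ∑ i ∈ Finset.Ico j k, (Sb i y - ∫ z, S i z ∂μ)
        with hFF
      set G : (Fin q → M) → ℝ := fun x => ψ j (FF (fun u => x (idx u))) with hG
      have hFF_meas0 : Measurable (fun x : Fin q → M => FF (fun u => x (idx u))) := by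
        simp only [hFF, hSb]
        refine Finset.measurable_sum _ fun i _ => Measurable.sub ?_ measurable_const
        refine Finset.measurable_sum _ fun jj _ => Finset.measurable_sum _ fun l _ => ?_
        exact (hvc.measurable.comp (measurable_pi_apply _)).mul
          (hwc.measurable.comp (measurable_pi_apply _))
      have hG_meas : Measurable G := (hψ_cont j).measurable.comp hFF_meas0
      have hG_bdd : ∀ x, |G x| ≤ Rr ^ γ := fun x => hψ_bdd j _
      have hCh0 : 0 ≤ Lφ * (((L : ℝ) + 1) * (Vh * Winf + Vinf * Wh)) := by positivity
      -- the separate Hölder property of G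
      have hG_hold : ∀ (t : Fin q) (x : Fin q → M) (y : M),
          |G x - G (Function.update x t y)|
            ≤ Lφ * (((L : ℝ) + 1) * (Vh * Winf + Vinf * Wh)) * dist (x t) y ^ η := by
        intro t x y
        have hd00 : (0 : ℝ) ≤ dist (x t) y ^ η := Real.rpow_nonneg dist_nonneg η
        have hcd : ∀ u : ℕ, dist (x (idx u)) (Function.update x t y (idx u)) ^ η
            = if idx u = t then dist (x t) y ^ η else 0 := by
          intro u
          by_cases h : idx u = t
          · rw [if_pos h, h, Function.update_self]
          · rw [if_neg h, Function.update_of_ne h, dist_self,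
              Real.zero_rpow (ne_of_gt hη0)]
        have hkey : ∀ (y₁ y₂ : ℕ → M),
            (∀ u, dist (y₁ u) (y₂ u) ^ η = (if idx u = t then dist (x t) y ^ η else 0)) →
            |FF y₁ - FF y₂| ≤ (((L : ℝ) + 1) * (Vh * Winf + Vinf * Wh)) * dist (x t) y ^ η := by
          intro y₁ y₂ hyd
          have hyeq : ∀ u, idx u ≠ t → y₁ u = y₂ u := by
            intro u hu
            have h1 := hyd u
            rw [if_neg hu] at h1
            have h2 : dist (y₁ u) (y₂ u) = 0 :=
              (Real.rpow_eq_zero dist_nonneg (ne_of_gt hη0)).1 h1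
            exact dist_eq_zero.1 h2
          have hpair : ∀ l jj : ℕ,
              |v (y₁ l) * w (y₁ jj) - v (y₂ l) * w (y₂ jj)|
              ≤ Vh * Winf * (if idx l = t then dist (x t) y ^ η else 0)
                + Vinf * Wh * (if idx jj = t then dist (x t) y ^ η else 0) := by
            intro l jj
            have h2 : |v (y₁ l) * w (y₁ jj) - v (y₂ l) * w (y₂ jj)|
                ≤ Vh * Winf * dist (y₁ l) (y₂ l) ^ η
                  + Vinf * Wh * dist (y₁ jj) (y₂ jj) ^ η := by
              have h1 : v (y₁ l) * w (y₁ jj) - v (y₂ l) * w (y₂ jj)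
                  = (v (y₁ l) - v (y₂ l)) * w (y₁ jj)
                    + v (y₂ l) * (w (y₁ jj) - w (y₂ jj)) := by ring
              rw [h1]
              calc |(v (y₁ l) - v (y₂ l)) * w (y₁ jj)
                      + v (y₂ l) * (w (y₁ jj) - w (y₂ jj))|
                  ≤ |(v (y₁ l) - v (y₂ l)) * w (y₁ jj)|
                    + |v (y₂ l) * (w (y₁ jj) - w (y₂ jj))| := abs_add_le _ _
                _ = |v (y₁ l) - v (y₂ l)| * |w (y₁ jj)|
                    + |v (y₂ l)| * |w (y₁ jj) - w (y₂ jj)| := by rw [abs_mul, abs_mul]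
                _ ≤ (Vh * dist (y₁ l) (y₂ l) ^ η) * Winf
                    + Vinf * (Wh * dist (y₁ jj) (y₂ jj) ^ η) :=
                    add_le_add (mul_le_mul (hvh _ _) (hw _) (abs_nonneg _) (by positivity))
                      (mul_le_mul (hv _) (hwh _ _) (abs_nonneg _) hVinf0)
                _ = Vh * Winf * dist (y₁ l) (y₂ l) ^ η
                    + Vinf * Wh * dist (y₁ jj) (y₂ jj) ^ η := by ring
            rw [hyd l, hyd jj] at h2
            exact h2
          by_cases hex : ∃ i₀ u₀, ((j ≤ i₀ ∧ i₀ < k) ∧ a (2 * i₀) ≤ u₀ ∧ u₀ < a (2 * i₀ + 1))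
              ∧ idx u₀ = t
          · obtain ⟨i₀, u₀, ⟨⟨hji₀, hi₀k⟩, hu₀1, hu₀2⟩, hu₀t⟩ := hex
            have huniq : ∀ i, j ≤ i → i < k → ∀ u, a (2 * i) ≤ u → u < a (2 * i + 1) →
                idx u = t → u = u₀ ∧ i = i₀ := by
              intro i h1 h2 u h3 h4 h5
              have h6 : u = u₀ := hinj i h1 h2 u h3 h4 i₀ hji₀ hi₀k u₀ hu₀1 hu₀2
                (h5.trans hu₀t.symm)
              subst h6
              exact ⟨rfl, hdisj i i₀ h1 h2 hji₀ hi₀k u h3 h4 hu₀1 hu₀2⟩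
            have hSbdiff : ∀ i, j ≤ i → i < k →
                |Sb i y₁ - Sb i y₂| ≤ (if i = i₀ then
                  (((L : ℝ) + 1) * (Vh * Winf + Vinf * Wh)) * dist (x t) y ^ η else 0) := by
              intro i h1 h2
              by_cases hii : i = i₀
              · rw [if_pos hii]
                subst hii
                simp only [hSb]
                rw [← Finset.sum_sub_distrib]
                have hcard : ∀ jj, jj ∈ Finset.Ico (a (2 * i)) (a (2 * i + 1)) →
                    ((Finset.Ico (a (2 * i)) jj).card : ℝ) ≤ (L : ℝ) + 1 := by
                  intro jj hjj
                  rw [Finset.mem_Ico] at hjj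
                  rw [Nat.card_Ico]
                  have h4 := (ha_add (2 * i)).2
                  have h5 : jj - a (2 * i) ≤ L + 1 := by omega
                  exact_mod_cast h5
                calc |∑ jj ∈ Finset.Ico (a (2 * i)) (a (2 * i + 1)),
                        ((∑ l ∈ Finset.Ico (a (2 * i)) jj, v (y₁ l) * w (y₁ jj))
                          - ∑ l ∈ Finset.Ico (a (2 * i)) jj, v (y₂ l) * w (y₂ jj))|
                    ≤ ∑ jj ∈ Finset.Ico (a (2 * i)) (a (2 * i + 1)),
                        |(∑ l ∈ Finset.Ico (a (2 * i)) jj, v (y₁ l) * w (y₁ jj))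
                          - ∑ l ∈ Finset.Ico (a (2 * i)) jj, v (y₂ l) * w (y₂ jj)| :=
                      Finset.abs_sum_le_sum_abs _ _
                  _ ≤ ∑ jj ∈ Finset.Ico (a (2 * i)) (a (2 * i + 1)),
                        (Vh * Winf * dist (x t) y ^ η
                            * (if u₀ ∈ Finset.Ico (a (2 * i)) jj then 1 else 0)
                          + Vinf * Wh * dist (x t) y ^ η
                            * (((L : ℝ) + 1) * (if jj = u₀ then 1 else 0))) := by
                      refine Finset.sum_le_sum fun jj hjj => ?_
                      have hjj2 := Finset.mem_Ico.1 hjj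
                      rw [← Finset.sum_sub_distrib]
                      have hstep1 : ∀ l, l ∈ Finset.Ico (a (2 * i)) jj →
                          |v (y₁ l) * w (y₁ jj) - v (y₂ l) * w (y₂ jj)|
                          ≤ Vh * Winf * dist (x t) y ^ η * (if l = u₀ then 1 else 0)
                            + Vinf * Wh * dist (x t) y ^ η * (if jj = u₀ then 1 else 0) := by
                        intro l hl
                        have hl2 := Finset.mem_Ico.1 hl
                        refine (hpair l jj).trans (add_le_add ?_ ?_)
                        · by_cases hlt : idx l = t
                          · have h7 := (huniq i h1 h2 l hl2.1 (lt_trans hl2.2 hjj2.2) hlt).1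
                            rw [if_pos hlt, if_pos h7]
                            ring_nf
                            exact le_refl _
                          · rw [if_neg hlt]
                            have : (0:ℝ) ≤ Vh * Winf * dist (x t) y ^ η
                                * (if l = u₀ then 1 else 0) := by positivity
                            linarith only [this]
                        · by_cases hjt : idx jj = t
                          · have h7 := (huniq i h1 h2 jj hjj2.1 hjj2.2 hjt).1
                            rw [if_pos hjt, if_pos h7]
                            ring_nf
                            exact le_refl _
                          · rw [if_neg hjt]
                            have : (0:ℝ) ≤ Vinf * Wh * dist (x t) y ^ η
                                * (if jj = u₀ then 1 else 0) := by positivity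
                            linarith only [this]
                      calc |∑ l ∈ Finset.Ico (a (2 * i)) jj,
                              (v (y₁ l) * w (y₁ jj) - v (y₂ l) * w (y₂ jj))|
                          ≤ ∑ l ∈ Finset.Ico (a (2 * i)) jj,
                              |v (y₁ l) * w (y₁ jj) - v (y₂ l) * w (y₂ jj)| :=
                            Finset.abs_sum_le_sum_abs _ _
                        _ ≤ ∑ l ∈ Finset.Ico (a (2 * i)) jj,
                              (Vh * Winf * dist (x t) y ^ η * (if l = u₀ then 1 else 0)
                                + Vinf * Wh * dist (x t) y ^ η
                                  * (if jj = u₀ then 1 else 0)) :=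
                            Finset.sum_le_sum hstep1
                        _ = Vh * Winf * dist (x t) y ^ η
                              * (∑ l ∈ Finset.Ico (a (2 * i)) jj, (if l = u₀ then (1:ℝ) else 0))
                            + Vinf * Wh * dist (x t) y ^ η
                              * (((Finset.Ico (a (2 * i)) jj).card : ℝ)
                                * (if jj = u₀ then 1 else 0)) := by
                            rw [Finset.sum_add_distrib, ← Finset.mul_sum, ← Finset.mul_sum,
                              Finset.sum_const, nsmul_eq_mul]
                            all_goals ring
                        _ ≤ Vh * Winf * dist (x t) y ^ η
                              * (if u₀ ∈ Finset.Ico (a (2 * i)) jj then 1 else 0)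
                            + Vinf * Wh * dist (x t) y ^ η
                              * (((L : ℝ) + 1) * (if jj = u₀ then 1 else 0)) := by
                            refine add_le_add ?_ ?_
                            · refine mul_le_mul_of_nonneg_left ?_ (by positivity)
                              rw [Finset.sum_ite_eq' (Finset.Ico (a (2 * i)) jj) u₀
                                (fun _ => (1:ℝ))]
                            · refine mul_le_mul_of_nonneg_left ?_ (by positivity)
                              refine mul_le_mul_of_nonneg_right (hcard jj hjj) ?_
                              split_ifs <;> norm_num
                  _ = Vh * Winf * dist (x t) y ^ η
                        * (∑ jj ∈ Finset.Ico (a (2 * i)) (a (2 * i + 1)),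
                            (if u₀ ∈ Finset.Ico (a (2 * i)) jj then (1:ℝ) else 0))
                      + Vinf * Wh * dist (x t) y ^ η * ((L : ℝ) + 1)
                        * (∑ jj ∈ Finset.Ico (a (2 * i)) (a (2 * i + 1)),
                            (if jj = u₀ then (1:ℝ) else 0)) := by
                      rw [Finset.sum_add_distrib, ← Finset.mul_sum, ← Finset.mul_sum]
                      congr 1
                      rw [Finset.mul_sum, Finset.mul_sum]
                      refine Finset.sum_congr rfl fun jj _ => by ring
                  _ ≤ Vh * Winf * dist (x t) y ^ η * ((L : ℝ) + 1)
                      + Vinf * Wh * dist (x t) y ^ η * ((L : ℝ) + 1) * 1 := by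
                      refine add_le_add ?_ ?_
                      · refine mul_le_mul_of_nonneg_left ?_ (by positivity)
                        calc ∑ jj ∈ Finset.Ico (a (2 * i)) (a (2 * i + 1)),
                              (if u₀ ∈ Finset.Ico (a (2 * i)) jj then (1:ℝ) else 0)
                            ≤ ∑ jj ∈ Finset.Ico (a (2 * i)) (a (2 * i + 1)), (1:ℝ) :=
                            Finset.sum_le_sum fun jj _ => by split_ifs <;> norm_num
                          _ = ((Finset.Ico (a (2 * i)) (a (2 * i + 1))).card : ℝ) := by
                            rw [Finset.sum_const, nsmul_eq_mul, mul_one]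
                          _ ≤ (L : ℝ) + 1 := by
                            rw [Nat.card_Ico]
                            have h4 := (ha_add (2 * i)).2
                            have h5 : a (2 * i + 1) - a (2 * i) ≤ L + 1 := by omega
                            exact_mod_cast h5
                      · refine mul_le_mul_of_nonneg_left ?_ (by positivity)
                        rw [Finset.sum_ite_eq' (Finset.Ico (a (2 * i)) (a (2 * i + 1))) u₀
                          (fun _ => (1:ℝ))]
                        split_ifs <;> norm_num
                  _ = (((L : ℝ) + 1) * (Vh * Winf + Vinf * Wh)) * dist (x t) y ^ η := by ring
              · rw [if_neg hii]
                have h3 : Sb i y₁ = Sb i y₂ := hSb_ext i y₁ y₂ fun u hu1 hu2 =>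
                  hyeq u (fun hcon => hii (huniq i h1 h2 u hu1 hu2 hcon).2)
                rw [h3, sub_self, abs_zero]
            calc |FF y₁ - FF y₂| = |∑ i ∈ Finset.Ico j k, (Sb i y₁ - Sb i y₂)| := by
                  simp only [hFF]
                  rw [← Finset.sum_sub_distrib]
                  congr 1
                  refine Finset.sum_congr rfl fun i _ => by ring
              _ ≤ ∑ i ∈ Finset.Ico j k, |Sb i y₁ - Sb i y₂| := Finset.abs_sum_le_sum_abs _ _
              _ ≤ ∑ i ∈ Finset.Ico j k, (if i = i₀ then
                    (((L : ℝ) + 1) * (Vh * Winf + Vinf * Wh)) * dist (x t) y ^ η else 0) := by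
                  refine Finset.sum_le_sum fun i hi => ?_
                  have hi2 := Finset.mem_Ico.1 hi
                  exact hSbdiff i hi2.1 hi2.2
              _ ≤ (((L : ℝ) + 1) * (Vh * Winf + Vinf * Wh)) * dist (x t) y ^ η := by
                  rw [Finset.sum_ite_eq' (Finset.Ico j k) i₀
                    (fun _ => (((L : ℝ) + 1) * (Vh * Winf + Vinf * Wh)) * dist (x t) y ^ η)]
                  split_ifs
                  · exact le_refl _
                  · positivity
          · have h3 : FF y₁ = FF y₂ := by
              simp only [hFF]
              refine Finset.sum_congr rfl fun i hi => ?_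
              have hi2 := Finset.mem_Ico.1 hi
              rw [hSb_ext i y₁ y₂ fun u hu1 hu2 => hyeq u fun hcon =>
                hex ⟨i, u, ⟨⟨hi2.1, hi2.2⟩, hu1, hu2⟩, hcon⟩]
            rw [h3, sub_self, abs_zero]
            positivity
        have h1 : |G x - G (Function.update x t y)|
            ≤ Lφ * |FF (fun u => x (idx u))
                - FF (fun u => Function.update x t y (idx u))| := by
          simp only [hG]
          exact hψ_lip j _ _
        calc |G x - G (Function.update x t y)|
            ≤ Lφ * |FF (fun u => x (idx u))
                - FF (fun u => Function.update x t y (idx u))| := h1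
          _ ≤ Lφ * ((((L : ℝ) + 1) * (Vh * Winf + Vinf * Wh)) * dist (x t) y ^ η) :=
              mul_le_mul_of_nonneg_left (hkey _ _ hcd) hLφ0
          _ = Lφ * (((L : ℝ) + 1) * (Vh * Winf + Vinf * Wh)) * dist (x t) y ^ η := by ring
      -- the two sides of the functional correlation bound
      have horb : (∫ x, G (fun i : Fin q => T^[nseq (i : ℕ)] x) ∂μ)
          = ∫ x, ψ j (∑ i ∈ Finset.Ico j k, X i x) ∂μ := by
        refine integral_congr_ae (Filter.Eventually.of_forall fun x => ?_)
        simp only [hG]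
        congr 1
        simp only [hFF]
        refine Finset.sum_congr rfl fun i hi => ?_
        have hi2 := Finset.mem_Ico.1 hi
        have h1 : Sb i (fun u => (fun i₂ : Fin q => T^[nseq (i₂ : ℕ)] x) (idx u))
            = Sb i (fun u => T^[u] x) := by
          refine hSb_ext i _ _ fun u hu1 hu2 => ?_
          obtain ⟨hq', hns, _, hiv⟩ := hballs i hi2.1 hi2.2 u hu1 hu2
          show T^[nseq ((idx u : ℕ))] x = T^[u] x
          rw [hiv, hns]
        rw [h1, hSb_orbit i hi2.2, hX i hi2.2]
      have hdec : (∫ x₀, ∫ x₁, G (fun i : Fin q =>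
            if (i : ℕ) < p then T^[nseq (i : ℕ)] x₀ else T^[nseq (i : ℕ)] x₁) ∂μ ∂μ)
          = ∫ x₁, ψ (j + 1) (∑ i ∈ Finset.Ico (j + 1) k, X i x₁) ∂μ := by
        have hpt : ∀ x₀ x₁ : M, G (fun i : Fin q =>
              if (i : ℕ) < p then T^[nseq (i : ℕ)] x₀ else T^[nseq (i : ℕ)] x₁)
            = ψ j (X j x₀ + ∑ i ∈ Finset.Ico (j + 1) k, X i x₁) := by
          intro x₀ x₁
          simp only [hG]
          congr 1
          simp only [hFF]
          rw [Finset.sum_eq_sum_Ico_succ_bot hj]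
          congr 1
          · have h1 : Sb j (fun u => (fun i₂ : Fin q =>
                  if (i₂ : ℕ) < p then T^[nseq (i₂ : ℕ)] x₀ else T^[nseq (i₂ : ℕ)] x₁) (idx u))
                = Sb j (fun u => T^[u] x₀) := by
              refine hSb_ext j _ _ fun u hu1 hu2 => ?_
              obtain ⟨hq', hns, hppf, hiv⟩ := hballs j le_rfl hj u hu1 hu2
              show (if ((idx u : ℕ)) < p then T^[nseq (idx u : ℕ)] x₀
                  else T^[nseq (idx u : ℕ)] x₁) = T^[u] x₀
              rw [hiv, if_pos (hppf.2 rfl), hns]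
            rw [h1, hSb_orbit j hj, hX j hj]
          · refine Finset.sum_congr rfl fun i hi => ?_
            have hi2 := Finset.mem_Ico.1 hi
            have h1 : Sb i (fun u => (fun i₂ : Fin q =>
                  if (i₂ : ℕ) < p then T^[nseq (i₂ : ℕ)] x₀ else T^[nseq (i₂ : ℕ)] x₁) (idx u))
                = Sb i (fun u => T^[u] x₁) := by
              refine hSb_ext i _ _ fun u hu1 hu2 => ?_
              obtain ⟨hq', hns, hppf, hiv⟩ := hballs i (by omega) hi2.2 u hu1 hu2
              show (if ((idx u : ℕ)) < p then T^[nseq (idx u : ℕ)] x₀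
                  else T^[nseq (idx u : ℕ)] x₁) = T^[u] x₁
              have hne : ¬ (e u < p) := fun hcon => by
                have := hppf.1 hcon
                omega
              rw [hiv, if_neg hne, hns]
            rw [h1, hSb_orbit i hi2.2, hX i hi2.2]
        calc (∫ x₀, ∫ x₁, G (fun i : Fin q =>
              if (i : ℕ) < p then T^[nseq (i : ℕ)] x₀ else T^[nseq (i : ℕ)] x₁) ∂μ ∂μ)
            = ∫ x₀, ∫ x₁, ψ j (X j x₀ + ∑ i ∈ Finset.Ico (j + 1) k, X i x₁) ∂μ ∂μ := by
              refine integral_congr_ae (Filter.Eventually.of_forall fun x₀ => ?_)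
              exact integral_congr_ae (Filter.Eventually.of_forall fun x₁ => hpt x₀ x₁)
          _ = ∫ x₁, ∫ x₀, ψ j (X j x₀ + ∑ i ∈ Finset.Ico (j + 1) k, X i x₁) ∂μ ∂μ := by
              apply integral_integral_swap
              have hm : Measurable (fun pr : M × M =>
                  ψ j (X j pr.1 + ∑ i ∈ Finset.Ico (j + 1) k, X i pr.2)) := by
                apply (hψ_cont j).measurable.comp
                exact ((hX_meas j hj).comp measurable_fst).add
                  (Finset.measurable_sum _ fun i hi =>
                    (hX_meas i (Finset.mem_Ico.1 hi).2).comp measurable_snd)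
              exact aux_integrable_of_bdd hm.aestronglyMeasurable (fun pr => hψ_bdd j _)
          _ = ∫ x₁, ψ (j + 1) (∑ i ∈ Finset.Ico (j + 1) k, X i x₁) ∂μ := by
              refine integral_congr_ae (Filter.Eventually.of_forall fun x₁ => ?_)
              exact key_b j hj _
      have hGinf0 : (0 : ℝ) ≤ Rr ^ γ := Real.rpow_nonneg hRr0 γ
      have hfcb := hF q p hpq nseq hnseq_mono hgap G hG_meas (Rr ^ γ) hGinf0 hG_bdd
        (fun _ => Lφ * (((L : ℝ) + 1) * (Vh * Winf + Vinf * Wh))) (fun _ => hCh0) hG_hold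
      rw [horb, hdec] at hfcb
      have hnum : C₀ * ((nseq p : ℝ) - (nseq (p - 1) : ℝ)) ^ (-γ)
            * (Rr ^ γ + ∑ _i : Fin q, (Lφ * (((L : ℝ) + 1) * (Vh * Winf + Vinf * Wh))))
          ≤ C₀ * 4 ^ γ * (1 + γ) * ((n : ℝ) ^ γ * ((Vinf + Vh) ^ γ * (Winf + Wh) ^ γ)) := by
        have h1 : nseq p = g := by
          simp only [hnseq]
          rw [if_neg (lt_irrefl p)]
          omega
        have h2 : nseq (p - 1) = b + (p - 1) := by
          simp only [hnseq]
          rw [if_pos (by omega : p - 1 < p)]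
        have h4 := Nat.div_add_mod n (2 * k)
        rw [← hL] at h4
        have h5 : n % (2 * k) < 2 * k := Nat.mod_lt _ hm0
        have h4a : L * (2 * k) ≤ n := by
          rw [hL]
          exact Nat.div_mul_le_self n (2 * k)
        have fq : q ≤ n := by omega
        have fd : L ≤ g - c := by omega
        set Δ : ℝ := ((nseq p : ℝ) - (nseq (p - 1) : ℝ)) with hΔdef
        have h3 : g = (g - c) + (b + (p - 1)) + 1 := by omega
        have hΔ : Δ = ((g - c : ℕ) : ℝ) + 1 := by
          rw [hΔdef, h1, h2]
          have h3r : (g : ℝ) = ((g - c : ℕ) : ℝ) + ((b + (p - 1) : ℕ) : ℝ) + 1 := by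
            exact_mod_cast congrArg (Nat.cast : ℕ → ℝ) h3
          rw [h3r]
          ring
        have hΔpos : (0:ℝ) < Δ := by rw [hΔ]; positivity
        have hΔL : ((L:ℝ) + 1) ≤ Δ := by
          rw [hΔ]
          have hcast : (L : ℝ) ≤ ((g - c : ℕ) : ℝ) := by exact_mod_cast fd
          linarith only [hcast]
        have hkL : (k : ℝ) * ((L:ℝ) + 1) ≤ (n : ℝ) := by
          have hcast : ((L * (2 * k) : ℕ) : ℝ) ≤ (n : ℝ) := by exact_mod_cast h4a
          have hcast2 : ((2 * k : ℕ) : ℝ) ≤ (n : ℝ) := by exact_mod_cast hn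
          push_cast at hcast hcast2
          nlinarith only [hcast, hcast2]
        have hqn : (q : ℝ) ≤ (n : ℝ) := by exact_mod_cast fq
        have hVb : Vinf * Winf ≤ (Vinf + Vh) * (Winf + Wh) := by nlinarith only [hVinf0, hVh0, hWinf0, hWh0]
        have hVb0 : (0:ℝ) ≤ (Vinf + Vh) * (Winf + Wh) := by positivity
        have hnr0 : (0:ℝ) ≤ (n:ℝ) := Nat.cast_nonneg n
        have hRrΔ : Rr ≤ 4 * (n:ℝ) * ((Vinf + Vh) * (Winf + Wh)) * Δ := by
          have s4 : Rr = 2 * (((k:ℝ) * ((L:ℝ)+1)) * (((L:ℝ)+1) * (Vinf * Winf))) := by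
            rw [hRr, hB, hK]; ring
          have s5 : ((k:ℝ) * ((L:ℝ)+1)) * (((L:ℝ)+1) * (Vinf * Winf))
              ≤ (n:ℝ) * (Δ * ((Vinf + Vh) * (Winf + Wh))) :=
            mul_le_mul hkL (mul_le_mul hΔL hVb (by positivity) hΔpos.le) (by positivity) hnr0
          nlinarith only [s4, s5, mul_nonneg (mul_nonneg hnr0 hΔpos.le) hVb0]
        have hdiv : Rr / Δ ≤ 4 * (n:ℝ) * ((Vinf + Vh) * (Winf + Wh)) := by
          rw [div_le_iff₀ hΔpos]
          exact hRrΔ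
        have hdiv0 : (0:ℝ) ≤ Rr / Δ := div_nonneg hRr0 hΔpos.le
        have hcount : (q:ℝ) * ((L:ℝ)+1) * Δ⁻¹ ≤ (n:ℝ) := by
          rw [← div_eq_mul_inv, div_le_iff₀ hΔpos]
          calc (q:ℝ) * ((L:ℝ)+1) ≤ (n:ℝ) * ((L:ℝ)+1) :=
              mul_le_mul_of_nonneg_right hqn (by positivity)
          _ ≤ (n:ℝ) * Δ := mul_le_mul_of_nonneg_left hΔL hnr0
        have hsumconst : (∑ _i : Fin q, (Lφ * (((L : ℝ) + 1) * (Vh * Winf + Vinf * Wh))))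
            = (q:ℝ) * (Lφ * (((L : ℝ) + 1) * (Vh * Winf + Vinf * Wh))) := by
          rw [Finset.sum_const, Finset.card_univ, Fintype.card_fin, nsmul_eq_mul]
        rw [hsumconst]
        have hpiece1 : Δ ^ (-γ) * Rr ^ γ
            ≤ 4 ^ γ * ((n:ℝ) ^ γ * ((Vinf+Vh) ^ γ * (Winf+Wh) ^ γ)) := by
          have e1 : Δ ^ (-γ) * Rr ^ γ = (Rr / Δ) ^ γ := by
            rw [Real.div_rpow hRr0 hΔpos.le, Real.rpow_neg hΔpos.le]
            ring
          rw [e1]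
          calc (Rr / Δ) ^ γ ≤ (4 * (n:ℝ) * ((Vinf+Vh) * (Winf+Wh))) ^ γ :=
                Real.rpow_le_rpow hdiv0 hdiv hγ0.le
          _ = 4 ^ γ * ((n:ℝ) ^ γ * ((Vinf+Vh) ^ γ * (Winf+Wh) ^ γ)) := by
              rw [Real.mul_rpow (by positivity) hVb0, Real.mul_rpow (by norm_num) hnr0,
                Real.mul_rpow (by positivity) (by positivity)]
              ring
        have hpiece2 : Δ ^ (-γ) * ((q:ℝ) * (Lφ * (((L : ℝ) + 1) * (Vh * Winf + Vinf * Wh))))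
            ≤ γ * 4 ^ γ * ((n:ℝ) ^ γ * ((Vinf+Vh) ^ γ * (Winf+Wh) ^ γ)) := by
          have e2 : Δ ^ (-γ) = (Δ ^ (γ - 1))⁻¹ * Δ⁻¹ := by
            rw [show -γ = (-(γ-1)) + (-1) from by ring, Real.rpow_add hΔpos,
              Real.rpow_neg hΔpos.le, Real.rpow_neg_one]
          have e3 : (Δ ^ (γ-1))⁻¹ * Rr ^ (γ-1) = (Rr / Δ) ^ (γ-1) := by
            rw [Real.div_rpow hRr0 hΔpos.le]
            ring
          have e4 : (Rr / Δ) ^ (γ - 1) ≤ (4 * (n:ℝ) * ((Vinf+Vh) * (Winf+Wh))) ^ (γ - 1) :=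
            Real.rpow_le_rpow hdiv0 hdiv (by linarith only [hγ])
          have e5 : Δ ^ (-γ) * ((q:ℝ) * (Lφ * (((L : ℝ) + 1) * (Vh * Winf + Vinf * Wh))))
              = γ * (((Δ ^ (γ-1))⁻¹ * Rr ^ (γ-1)) * (((q:ℝ) * ((L:ℝ)+1) * Δ⁻¹)
                  * (Vh * Winf + Vinf * Wh))) := by
            rw [e2, hLφ]
            ring
          rw [e5]
          have e6 : ((Δ ^ (γ-1))⁻¹ * Rr ^ (γ-1)) * (((q:ℝ) * ((L:ℝ)+1) * Δ⁻¹)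
                  * (Vh * Winf + Vinf * Wh))
              ≤ ((4 * (n:ℝ) * ((Vinf+Vh) * (Winf+Wh))) ^ (γ-1)) * ((n:ℝ)
                  * (2 * ((Vinf+Vh) * (Winf+Wh)))) := by
            refine mul_le_mul (by rw [e3]; exact e4) ?_ ?_ ?_
            · refine mul_le_mul hcount (by nlinarith only [hVinf0, hVh0, hWinf0, hWh0]) (by positivity) hnr0
            · exact mul_nonneg (mul_nonneg (mul_nonneg (Nat.cast_nonneg q) (by positivity))
                (inv_nonneg.2 hΔpos.le)) (by positivity)
            · exact Real.rpow_nonneg (by positivity) _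
          have h44 : (4:ℝ) ^ (γ-1) * 4 = 4 ^ γ := by
            rw [aux_rpow_succ (by norm_num : (0:ℝ) ≤ 4) (by linarith only [hγ]) (by linarith only [hγ0]),
              sub_add_cancel]
          calc γ * (((Δ ^ (γ-1))⁻¹ * Rr ^ (γ-1)) * (((q:ℝ) * ((L:ℝ)+1) * Δ⁻¹)
                  * (Vh * Winf + Vinf * Wh)))
              ≤ γ * (((4 * (n:ℝ) * ((Vinf+Vh) * (Winf+Wh))) ^ (γ-1)) * ((n:ℝ)
                  * (2 * ((Vinf+Vh) * (Winf+Wh))))) := mul_le_mul_of_nonneg_left e6 hγ0.le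
          _ = γ * 2 * ((4:ℝ) ^ (γ-1) * (((n:ℝ)^(γ-1) * (n:ℝ)) * (((Vinf+Vh)^(γ-1) * (Vinf+Vh))
                * ((Winf+Wh)^(γ-1) * (Winf+Wh))))) := by
              rw [Real.mul_rpow (by positivity) hVb0, Real.mul_rpow (by norm_num) hnr0,
                Real.mul_rpow (by positivity) (by positivity)]
              ring
          _ = γ * 2 * ((4:ℝ) ^ (γ-1) * ((n:ℝ)^γ * ((Vinf+Vh)^γ * (Winf+Wh)^γ))) := by
              rw [aux_rpow_succ hnr0 (by linarith only [hγ]) (by linarith only [hγ0]),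
                aux_rpow_succ (by positivity : (0:ℝ) ≤ Vinf+Vh) (by linarith only [hγ]) (by linarith only [hγ0]),
                aux_rpow_succ (by positivity : (0:ℝ) ≤ Winf+Wh) (by linarith only [hγ]) (by linarith only [hγ0]),
                sub_add_cancel]
          _ ≤ γ * ((4:ℝ) ^ (γ-1) * 4) * ((n:ℝ)^γ * ((Vinf+Vh)^γ * (Winf+Wh)^γ)) := by
              have c0 : (0:ℝ) ≤ (4:ℝ) ^ (γ-1) := Real.rpow_nonneg (by norm_num) _
              have hx : (0:ℝ) ≤ (n:ℝ)^γ * ((Vinf+Vh)^γ * (Winf+Wh)^γ) := by positivity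
              linarith only [mul_nonneg (mul_nonneg hγ0.le c0) hx]
          _ = γ * 4 ^ γ * ((n:ℝ)^γ * ((Vinf+Vh)^γ * (Winf+Wh)^γ)) := by rw [h44]
        calc C₀ * Δ ^ (-γ)
              * (Rr ^ γ + (q:ℝ) * (Lφ * (((L : ℝ) + 1) * (Vh * Winf + Vinf * Wh))))
            = C₀ * (Δ ^ (-γ) * Rr ^ γ)
              + C₀ * (Δ ^ (-γ) * ((q:ℝ) * (Lφ * (((L : ℝ) + 1)
                * (Vh * Winf + Vinf * Wh))))) := by ring
        _ ≤ C₀ * (4 ^ γ * ((n:ℝ) ^ γ * ((Vinf+Vh) ^ γ * (Winf+Wh) ^ γ)))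
              + C₀ * (γ * 4 ^ γ * ((n:ℝ) ^ γ * ((Vinf+Vh) ^ γ * (Winf+Wh) ^ γ))) :=
            add_le_add (mul_le_mul_of_nonneg_left hpiece1 hC₀.le)
              (mul_le_mul_of_nonneg_left hpiece2 hC₀.le)
        _ = C₀ * 4 ^ γ * (1 + γ) * ((n : ℝ) ^ γ * ((Vinf + Vh) ^ γ * (Winf + Wh) ^ γ)) := by
            ring
      have habs := (abs_sub_le_iff.1 hfcb).1
      have hDj : D j = ∫ x, ψ j (∑ i ∈ Finset.Ico j k, X i x) ∂μ := rfl
      have hDj1 : D (j + 1) = ∫ x₁, ψ (j + 1) (∑ i ∈ Finset.Ico (j + 1) k, X i x₁) ∂μ := rfl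
      rw [← hDj, ← hDj1] at habs
      linarith only [habs, hnum]
  have hERR0 : 0 ≤ C₀ * 4 ^ γ * (1 + γ) * ((n : ℝ) ^ γ * ((Vinf + Vh) ^ γ * (Winf + Wh) ^ γ)) := by
    positivity
  have htel : ∀ j, j ≤ k → D 0 ≤ D j + (j : ℝ)
      * (C₀ * 4 ^ γ * (1 + γ) * ((n : ℝ) ^ γ * ((Vinf + Vh) ^ γ * (Winf + Wh) ^ γ))) := by
    intro j
    induction j with
    | zero => intro _; simp
    | succ i ih =>
        intro h
        have h1 := ih (by omega)
        have h2 := hstep i (by omega)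
        push_cast
        linarith only [h1, h2]
  have hfinal := htel k le_rfl
  rw [hD0, hDk] at hfinal
  calc (∫ x, |∑ i ∈ Finset.range k, X i x| ^ γ ∂μ)
      ≤ (∫ ω, |∑ i ∈ Finset.range k, Xhat i ω| ^ γ ∂P) + (k : ℝ)
        * (C₀ * 4 ^ γ * (1 + γ) * ((n : ℝ) ^ γ * ((Vinf + Vh) ^ γ * (Winf + Wh) ^ γ))) :=
        hfinal
  _ = C₀ * 4 ^ γ * (1 + γ) * (k : ℝ) * (n : ℝ) ^ γ * (Vinf + Vh) ^ γ * (Winf + Wh) ^ γ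
      + ∫ ω, |∑ i ∈ Finset.range k, Xhat i ω| ^ γ ∂P := by ring
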